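/- Let C > 0 and D ∈ ℝ, and define h(x) = e^{−x}·(C·ψ(x) + D·(x − 1)) for x ≥ 0, where ψ(s) = −1/20 + (2/5)e^{−3s} − (9/10)e^{−2s} + (1/2)e^{−s}. Then equality holds in the Cauchy–Schwarz bound underlying the local Bahadur efficiency of the integral-type test: (∫₀^∞ ψ(x)·h(x) dx)² = (∫₀^∞ ψ(x)²·e^{−x} dx)·(∫₀^∞ h(x)²·e^{x} dx − (∫₀^∞ x·h(x) dx)²). -/

import Mathlib

open Real MeasureTheory Set

/-- The projection `ψ` from the paper. -/
noncomputable def psi (s : ℝ) : ℝ :=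
  -1/20 + (2/5) * exp (-(3*s)) - (9/10) * exp (-(2*s)) + (1/2) * exp (-s)

lemma Jint (k a : ℕ) (ha : 0 < a) :
    IntegrableOn (fun x : ℝ => x ^ k * exp (-x) ^ a) (Ioi 0) := by
  have h := integrableOn_rpow_mul_exp_neg_mul_rpow (p := 1) (s := (k : ℝ)) (b := (a : ℝ))
    (by exact lt_of_lt_of_le neg_one_lt_zero (Nat.cast_nonneg k)) one_pos (by exact_mod_cast ha)
  refine h.congr_fun (fun x hx => ?_) measurableSet_Ioi
  rw [mem_Ioi] at hx
  dsimp only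
  rw [Real.rpow_one, Real.rpow_natCast, show -(a : ℝ) * x = (a : ℕ) * (-x) by push_cast; ring,
    Real.exp_nat_mul]

lemma Jval (k a : ℕ) (ha : 0 < a) :
    ∫ x in Ioi (0:ℝ), x ^ k * exp (-x) ^ a = (Nat.factorial k : ℝ) / (a : ℝ) ^ (k + 1) := by
  have h := integral_rpow_mul_exp_neg_mul_Ioi (a := (k : ℝ) + 1) (r := (a : ℝ))
    (by positivity) (by exact_mod_cast ha)
  rw [show ((k : ℝ) + 1) - 1 = (k : ℝ) by ring] at h
  have e : ∫ x in Ioi (0:ℝ), x ^ k * exp (-x) ^ a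
      = ∫ t in Ioi (0:ℝ), t ^ (k : ℝ) * exp (-((a:ℝ) * t)) := by
    refine setIntegral_congr_fun measurableSet_Ioi (fun x hx => ?_)
    rw [Real.rpow_natCast, show -((a:ℝ) * x) = (a : ℕ) * (-x) by push_cast; ring,
      Real.exp_nat_mul]
  rw [e, h, Real.Gamma_nat_eq_factorial k,
    show ((k : ℝ) + 1) = ((k + 1 : ℕ) : ℝ) by push_cast; ring, Real.rpow_natCast]
  field_simp
  rw [← mul_pow, one_div_mul_cancel (by exact_mod_cast ha.ne'), one_pow]

/-- Linear combinations of `x^k * exp(-x)^a`. -/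
noncomputable def combo : List (ℝ × ℕ × ℕ) → ℝ → ℝ
  | [], _ => 0
  | p :: l, x => p.1 * (x ^ p.2.1 * Real.exp (-x) ^ p.2.2) + combo l x

lemma combo_int : ∀ l : List (ℝ × ℕ × ℕ), (∀ p ∈ l, 0 < p.2.2) →
    IntegrableOn (combo l) (Ioi 0)
  | [], _ => by
      simp only [combo]
      exact integrableOn_zero
  | p :: l, h => by
      have h1 : IntegrableOn (fun x : ℝ => p.1 * (x ^ p.2.1 * Real.exp (-x) ^ p.2.2)) (Ioi 0) :=
        (Jint p.2.1 p.2.2 (h p (List.mem_cons_self))).const_mul p.1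
      have h2 := combo_int l (fun q hq => h q (List.mem_cons_of_mem _ hq))
      exact h1.add h2

lemma combo_val : ∀ l : List (ℝ × ℕ × ℕ), (∀ p ∈ l, 0 < p.2.2) →
    ∫ x in Ioi (0:ℝ), combo l x
      = (l.map (fun p => p.1 * Nat.factorial p.2.1 / (p.2.2 : ℝ) ^ (p.2.1 + 1))).sum
  | [], _ => by simp [combo]
  | p :: l, h => by
      have h1 : IntegrableOn (fun x : ℝ => p.1 * (x ^ p.2.1 * Real.exp (-x) ^ p.2.2)) (Ioi 0) :=
        (Jint p.2.1 p.2.2 (h p (List.mem_cons_self))).const_mul p.1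
      have h2 := combo_int l (fun q hq => h q (List.mem_cons_of_mem _ hq))
      have : combo (p :: l) = fun x => p.1 * (x ^ p.2.1 * Real.exp (-x) ^ p.2.2) + combo l x := rfl
      rw [this, integral_add h1 h2, integral_const_mul, Jval _ _ (h p (List.mem_cons_self)),
        combo_val l (fun q hq => h q (List.mem_cons_of_mem _ hq))]
      simp [mul_div_assoc]

/-- For `h(x) = e^{−x}(C·ψ(x) + D·(x−1))` with `C > 0`, equality holds in the
Cauchy–Schwarz bound underlying the local Bahadur efficiency of the integral-type test. -/
theorem stmt_16 (C D : ℝ) (hC : 0 < C)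
    (h : ℝ → ℝ) (hdef : ∀ x, 0 ≤ x → h x = exp (-x) * (C * psi x + D * (x - 1))) :
    (∫ x in Ioi (0:ℝ), psi x * h x)^2 =
      (∫ x in Ioi (0:ℝ), (psi x)^2 * exp (-x)) *
        ((∫ x in Ioi (0:ℝ), (h x)^2 * exp x) - (∫ x in Ioi (0:ℝ), x * h x)^2) := by
  -- coefficient lists
  set Q : List (ℝ × ℕ × ℕ) := [(-1/20,(1,1)), (1/20,(0,1)), (2/5,(1,4)), (-2/5,(0,4)),
    (-9/10,(1,3)), (9/10,(0,3)), (1/2,(1,2)), (-1/2,(0,2))] with hQ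
  set S : List (ℝ × ℕ × ℕ) := [(-1/20,(1,1)),(2/5,(1,4)),(-9/10,(1,3)),(1/2,(1,2))] with hS
  set R : List (ℝ × ℕ × ℕ) := [(1,(2,1)),(-2,(1,1)),(1,(0,1))] with hR
  set W : List (ℝ × ℕ × ℕ) := [(1,(2,1)),(-1,(1,1))] with hW
  set L2 : List (ℝ × ℕ × ℕ) := [(1/400,(0,1)),(-1/20,(0,2)),(17/50,(0,3)),(-47/50,(0,4)),
    (121/100,(0,5)),(-18/25,(0,6)),(4/25,(0,7))] with hL2
  have hQpos : ∀ p ∈ Q, 0 < p.2.2 := by rw [hQ]; intro p hp; fin_cases hp <;> norm_num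
  have hSpos : ∀ p ∈ S, 0 < p.2.2 := by rw [hS]; intro p hp; fin_cases hp <;> norm_num
  have hRpos : ∀ p ∈ R, 0 < p.2.2 := by rw [hR]; intro p hp; fin_cases hp <;> norm_num
  have hWpos : ∀ p ∈ W, 0 < p.2.2 := by rw [hW]; intro p hp; fin_cases hp <;> norm_num
  have hL2pos : ∀ p ∈ L2, 0 < p.2.2 := by rw [hL2]; intro p hp; fin_cases hp <;> norm_num
  -- psi² e^{-x} equals combo L2 on Ioi 0
  have hpsi_eq : ∀ x : ℝ, (psi x)^2 * exp (-x) = combo L2 x := by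
    intro x
    have e3 : exp (-(3*x)) = exp (-x) ^ 3 := by
      rw [show -(3*x) = (3:ℕ) * (-x) by norm_num, Real.exp_nat_mul]
    have e2 : exp (-(2*x)) = exp (-x) ^ 2 := by
      rw [show -(2*x) = (2:ℕ) * (-x) by norm_num, Real.exp_nat_mul]
    simp only [psi, e3, e2, hL2, combo]
    ring
  have int_psi2 : IntegrableOn (fun x : ℝ => (psi x)^2 * exp (-x)) (Ioi 0) := by
    have := combo_int L2 hL2pos
    exact this.congr_fun (fun x _ => (hpsi_eq x).symm) measurableSet_Ioi
  have valQ : ∫ x in Ioi (0:ℝ), combo Q x = 0 := by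
    rw [combo_val Q hQpos, hQ]; norm_num [Nat.factorial]
  have valS : ∫ x in Ioi (0:ℝ), combo S x = 0 := by
    rw [combo_val S hSpos, hS]; norm_num [Nat.factorial]
  have valR : ∫ x in Ioi (0:ℝ), combo R x = 1 := by
    rw [combo_val R hRpos, hR]; norm_num [Nat.factorial]
  have valW : ∫ x in Ioi (0:ℝ), combo W x = 1 := by
    rw [combo_val W hWpos, hW]; norm_num [Nat.factorial]
  set P := ∫ x in Ioi (0:ℝ), (psi x)^2 * exp (-x) with hP
  -- key exp facts used in pointwise identities
  have eQ : ∀ x ∈ Ioi (0:ℝ), psi x * (x - 1) * exp (-x) = combo Q x := by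
    intro x _
    have e3 : exp (-(3*x)) = exp (-x) ^ 3 := by
      rw [show -(3*x) = (3:ℕ) * (-x) by norm_num, Real.exp_nat_mul]
    have e2 : exp (-(2*x)) = exp (-x) ^ 2 := by
      rw [show -(2*x) = (2:ℕ) * (-x) by norm_num, Real.exp_nat_mul]
    simp only [psi, e3, e2, hQ, combo]
    ring
  -- H1 : ∫ psi * h = C * P
  have H1 : ∫ x in Ioi (0:ℝ), psi x * h x = C * P := by
    have e : ∀ x ∈ Ioi (0:ℝ), psi x * h x
        = C * ((psi x)^2 * exp (-x)) + D * combo Q x := by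
      intro x hx
      rw [hdef x (le_of_lt hx), ← eQ x hx]
      ring
    rw [setIntegral_congr_fun measurableSet_Ioi e,
      integral_add (int_psi2.const_mul C) ((combo_int Q hQpos).const_mul D),
      integral_const_mul, integral_const_mul, valQ, ← hP]
    ring
  -- H3 : ∫ x * h = D
  have H3 : ∫ x in Ioi (0:ℝ), x * h x = D := by
    have e : ∀ x ∈ Ioi (0:ℝ), x * h x = C * combo S x + D * combo W x := by
      intro x _
      have e3 : exp (-(3*x)) = exp (-x) ^ 3 := by
        rw [show -(3*x) = (3:ℕ) * (-x) by norm_num, Real.exp_nat_mul]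
      have e2 : exp (-(2*x)) = exp (-x) ^ 2 := by
        rw [show -(2*x) = (2:ℕ) * (-x) by norm_num, Real.exp_nat_mul]
      rw [hdef x (by linarith [mem_Ioi.mp ‹x ∈ Ioi (0:ℝ)›])]
      simp only [psi, e3, e2, hS, hW, combo]
      ring
    rw [setIntegral_congr_fun measurableSet_Ioi e,
      integral_add ((combo_int S hSpos).const_mul C) ((combo_int W hWpos).const_mul D),
      integral_const_mul, integral_const_mul, valS, valW]
    ring
  -- H2 : ∫ h² e^x = C² P + D²
  have H2 : ∫ x in Ioi (0:ℝ), (h x)^2 * exp x = C^2 * P + D^2 := by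
    have e : ∀ x ∈ Ioi (0:ℝ), (h x)^2 * exp x
        = C^2 * ((psi x)^2 * exp (-x)) + ((2*C*D) * combo Q x + D^2 * combo R x) := by
      intro x hx
      have huv : exp (-x) * exp x = 1 := by rw [← Real.exp_add]; simp
      rw [hdef x (le_of_lt hx), ← eQ x hx]
      have : combo R x = (x-1)^2 * exp (-x) := by simp only [hR, combo]; ring
      rw [this]
      linear_combination (exp (-x) * (C * psi x + D * (x - 1))^2) * huv
    have hQR : IntegrableOn (fun x : ℝ => (2*C*D) * combo Q x + D^2 * combo R x) (Ioi 0) :=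
      ((combo_int Q hQpos).const_mul (2*C*D)).add ((combo_int R hRpos).const_mul (D^2))
    rw [setIntegral_congr_fun measurableSet_Ioi e,
      integral_add (int_psi2.const_mul (C^2)) hQR,
      integral_add ((combo_int Q hQpos).const_mul (2*C*D)) ((combo_int R hRpos).const_mul (D^2)),
      integral_const_mul, integral_const_mul, integral_const_mul, valQ, valR, ← hP]
    ring
  rw [H1, H2, H3]
  ring
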